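/- Let G be a tree with incidence matrix B, uniform weights w_k = w* > 0, and let M̂ be any motion-parameter matrix with Λ̂ = M̂ B̄^T (with B̄ = B ⊗ I_m) satisfying M̂ z* = 1_n ⊗ v* for the target relative positions z* = B̄^T p*. If |κ| < w* λ_min(B̄^T B̄) / ||B̄^T M̂||₂, then the error e(t) = B̄^T p(t) - z* along solutions of ṗ = -(L̄ - κΛ̂)p + L̄ p* satisfies dV/dt ≤ -α V for V = ||e||²/2 and some α > 0; hence e(t) → 0 exponentially and ṗ(t) → κ(1_n ⊗ v*). -/

import Mathlib

open Matrix Kronecker Filter Topology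

noncomputable def inc (n e : ℕ) (tl hd : Fin e → Fin n) : Matrix (Fin n) (Fin e) ℝ :=
  Matrix.of fun i k => if i = tl k then 1 else if i = hd k then -1 else 0

def Conn (n e : ℕ) (tl hd : Fin e → Fin n) : Prop :=
  ∀ i j : Fin n, Relation.ReflTransGen
    (fun a b => ∃ k, (tl k = a ∧ hd k = b) ∨ (tl k = b ∧ hd k = a)) i j

section Aux

lemma stmt7aux_dotself_nonneg {ι : Type*} [Fintype ι] (x : ι → ℝ) : 0 ≤ x ⬝ᵥ x :=
  Finset.sum_nonneg fun i _ => mul_self_nonneg (x i)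

lemma stmt7aux_rayleigh_lower {ι : Type*} [Fintype ι] [DecidableEq ι]
    (S : Matrix ι ι ℝ) (hS : S.IsHermitian) (l : ℝ)
    (hmin : ∀ (ν : ℝ) (v : ι → ℝ), v ≠ 0 → S *ᵥ v = ν • v → l ≤ ν)
    (x : ι → ℝ) : l * (x ⬝ᵥ x) ≤ x ⬝ᵥ (S *ᵥ x) := by
  have hT : (S - l • 1).IsHermitian := by
    have := hS.eq
    simp [Matrix.IsHermitian, Matrix.conjTranspose_smul] at this ⊢
    exact this
  have hev : ∀ i, 0 ≤ hT.eigenvalues i := by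
    intro i
    have h1 := hT.mulVec_eigenvectorBasis i
    have h2 : ⇑(hT.eigenvectorBasis i) ≠ 0 := by
      intro h
      exact hT.eigenvectorBasis.orthonormal.ne_zero i (by ext j; exact congrFun h j)
    have h3 : S *ᵥ ⇑(hT.eigenvectorBasis i) =
        (hT.eigenvalues i + l) • ⇑(hT.eigenvectorBasis i) := by
      have := congrArg (· + (l • (1:Matrix ι ι ℝ)) *ᵥ ⇑(hT.eigenvectorBasis i)) h1
      simpa [Matrix.sub_mulVec, Matrix.smul_mulVec, Matrix.one_mulVec, add_smul,
        sub_add_cancel, add_comm] using this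
    have := hmin _ _ h2 h3
    linarith
  have hps := ((Matrix.IsHermitian.posSemidef_iff_eigenvalues_nonneg hT).2 (fun i => hev i)).dotProduct_mulVec_nonneg x
  have hstar : star x = x := by simp
  rw [hstar] at hps
  have hexp : x ⬝ᵥ ((S - l • 1) *ᵥ x) = x ⬝ᵥ (S *ᵥ x) - l * (x ⬝ᵥ x) := by
    simp [Matrix.sub_mulVec, Matrix.smul_mulVec, Matrix.one_mulVec, dotProduct_sub,
      dotProduct_smul, smul_eq_mul]
  linarith [hexp ▸ hps]

lemma stmt7aux_dot_mulVec_abs_le {ι : Type*} [Fintype ι] [DecidableEq ι]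
    (N : Matrix ι ι ℝ) (x : ι → ℝ) :
    |x ⬝ᵥ (N *ᵥ x)| ≤ ‖LinearMap.toContinuousLinearMap (Matrix.toEuclideanLin N)‖ * (x ⬝ᵥ x) := by
  set T := LinearMap.toContinuousLinearMap (Matrix.toEuclideanLin N) with hT
  set y : EuclideanSpace ℝ ι := (WithLp.equiv 2 (ι → ℝ)).symm x with hy
  have h1 : x ⬝ᵥ (N *ᵥ x) = @inner ℝ _ _ y (T y) := by
    rw [EuclideanSpace.inner_eq_star_dotProduct, dotProduct_comm]
    rfl
  have h2 : |@inner ℝ _ _ y (T y)| ≤ ‖y‖ * ‖T y‖ := abs_real_inner_le_norm _ _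
  have h3 : ‖T y‖ ≤ ‖T‖ * ‖y‖ := T.le_opNorm y
  have h4 : ‖y‖ * ‖y‖ = x ⬝ᵥ x := by
    rw [← real_inner_self_eq_norm_mul_norm, EuclideanSpace.inner_eq_star_dotProduct]
    rfl
  calc |x ⬝ᵥ (N *ᵥ x)| = |@inner ℝ _ _ y (T y)| := by rw [h1]
    _ ≤ ‖y‖ * ‖T y‖ := h2
    _ ≤ ‖y‖ * (‖T‖ * ‖y‖) := by nlinarith [norm_nonneg (T y), norm_nonneg y]
    _ = ‖T‖ * (‖y‖ * ‖y‖) := by ring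
    _ = ‖T‖ * (x ⬝ᵥ x) := by rw [h4]

lemma stmt7aux_no_selfloop (n : ℕ) (hn : 2 ≤ n) (tl hd : Fin (n-1) → Fin n)
    (hconn : Conn n (n-1) tl hd) (k0 : Fin (n-1)) : tl k0 ≠ hd k0 := by
  intro hloop
  have hli : LinearIndependent ℝ (fun i : Fin n => (fun k => inc n (n-1) tl hd i k)) := by
    rw [Fintype.linearIndependent_iff]
    intro g hg
    have hcol : ∀ k : Fin (n-1), ∑ i, g i * inc n (n-1) tl hd i k = 0 := by
      intro k
      have := congrFun hg k
      simpa [Finset.sum_apply] using this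
    have hedge : ∀ a b : Fin n, (∃ k, (tl k = a ∧ hd k = b) ∨ (tl k = b ∧ hd k = a)) →
        g a = g b := by
      rintro a b ⟨k, hk⟩
      by_cases hsl : tl k = hd k
      · rcases hk with ⟨h1, h2⟩ | ⟨h1, h2⟩ <;> rw [← h1, ← h2, hsl]
      · have hsum : ∑ i, g i * inc n (n-1) tl hd i k = g (tl k) - g (hd k) := by
          have heach : ∀ i, g i * inc n (n-1) tl hd i k =
              (if i = tl k then g i else 0) + (if i = hd k then -g i else 0) := by
            intro i
            simp only [inc, Matrix.of_apply]
            by_cases h1 : i = tl k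
            · subst h1; simp [hsl]
            · by_cases h2 : i = hd k
              · subst h2; simp [h1]
              · simp [h1, h2]
          rw [Finset.sum_congr rfl (fun i _ => heach i), Finset.sum_add_distrib]
          simp [Finset.sum_ite_eq', sub_eq_add_neg]
        have hck := hcol k
        rw [hsum] at hck
        have hab : g (tl k) = g (hd k) := by linarith
        rcases hk with ⟨h1, h2⟩ | ⟨h1, h2⟩ <;> rw [← h1, ← h2] <;> [exact hab; exact hab.symm]
    have key : ∀ i j : Fin n, Relation.ReflTransGen
        (fun a b => ∃ k, (tl k = a ∧ hd k = b) ∨ (tl k = b ∧ hd k = a)) i j → g i = g j := by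
      intro i j h
      induction h with
      | refl => rfl
      | tail _ h ih => rw [ih, hedge _ _ h]
    have hconst : ∀ i : Fin n, g i = g (tl k0) := fun i => key _ _ (hconn i (tl k0))
    have hzero : g (tl k0) = 0 := by
      have hck := hcol k0
      have hsum : ∑ i, g i * inc n (n-1) tl hd i k0 = g (tl k0) := by
        have heach : ∀ i, g i * inc n (n-1) tl hd i k0 = if i = tl k0 then g i else 0 := by
          intro i
          simp only [inc, Matrix.of_apply, ← hloop]
          by_cases h1 : i = tl k0 <;> simp [h1]
        rw [Finset.sum_congr rfl (fun i _ => heach i)]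
        simp [Finset.sum_ite_eq']
      rw [hsum] at hck; exact hck
    intro i
    rw [hconst i, hzero]
  have hcard := hli.fintype_card_le_finrank
  simp [Module.finrank_pi] at hcard
  omega

lemma stmt7aux_inc_colsum (n e : ℕ) (tl hd : Fin e → Fin n) (hsl : ∀ k, tl k ≠ hd k)
    (k : Fin e) : ∑ i, inc n e tl hd i k = 0 := by
  have heach : ∀ i, inc n e tl hd i k =
      (if i = tl k then (1:ℝ) else 0) + (if i = hd k then -1 else 0) := by
    intro i
    simp only [inc, Matrix.of_apply]
    by_cases h1 : i = tl k
    · subst h1; simp [hsl k]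
    · by_cases h2 : i = hd k
      · subst h2; simp [h1, Ne.symm (hsl k)]
      · simp [h1, h2]
  rw [Finset.sum_congr rfl (fun i _ => heach i), Finset.sum_add_distrib]
  simp [Finset.sum_ite_eq']

lemma stmt7aux_Bbt_const_eq_zero {n e m : ℕ} (tl hd : Fin e → Fin n)
    (hsl : ∀ k, tl k ≠ hd k) (vstar : Fin m → ℝ) :
    (inc n e tl hd ⊗ₖ (1 : Matrix (Fin m) (Fin m) ℝ))ᵀ *ᵥ (fun il => vstar il.2) = 0 := by
  funext kj
  obtain ⟨k, j⟩ := kj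
  simp only [Matrix.mulVec, dotProduct, Matrix.transpose_apply, Matrix.kroneckerMap_apply]
  rw [Fintype.sum_prod_type]
  have hinner : ∀ i : Fin n, ∑ l : Fin m, inc n e tl hd i k * (1 : Matrix (Fin m) (Fin m) ℝ) l j
      * vstar l = inc n e tl hd i k * vstar j := by
    intro i
    have h1 : ∀ l : Fin m, inc n e tl hd i k * (1 : Matrix (Fin m) (Fin m) ℝ) l j * vstar l
        = if l = j then inc n e tl hd i k * vstar j else 0 := by
      intro l
      rw [Matrix.one_apply]
      rcases eq_or_ne l j with h | h <;> simp [h]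
    rw [Finset.sum_congr rfl (fun l _ => h1 l)]
    simp [Finset.sum_ite_eq']
  rw [Finset.sum_congr rfl (fun i _ => hinner i), ← Finset.sum_mul,
    stmt7aux_inc_colsum n e tl hd hsl k]
  simp

end Aux

/-- Lyapunov bound on `κ` for a tree graph with uniform weight `w*`:
if `|κ| < w* λ_min(B̄ᵀB̄)/‖B̄ᵀM̂‖₂`, the error `e = B̄ᵀp - z*` satisfies
`dV/dt ≤ -αV` for `V = ‖e‖²/2`, hence `e → 0` exponentially and
`ṗ → κ (1ₙ ⊗ v*)`. -/
theorem stmt7 (n m : ℕ) (hn : 2 ≤ n) (hm : 1 ≤ m)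
    (tl hd : Fin (n - 1) → Fin n) (hconn : Conn n (n - 1) tl hd)
    (wstar : ℝ) (hw : 0 < wstar)
    (Bb : Matrix (Fin n × Fin m) (Fin (n - 1) × Fin m) ℝ)
    (hBb : Bb = inc n (n - 1) tl hd ⊗ₖ (1 : Matrix (Fin m) (Fin m) ℝ))
    (Mhat : Matrix (Fin n × Fin m) (Fin (n - 1) × Fin m) ℝ)
    (pstar : Fin n × Fin m → ℝ) (vstar : Fin m → ℝ) (κ : ℝ)
    (zstar : Fin (n - 1) × Fin m → ℝ) (hz : zstar = Bbᵀ *ᵥ pstar)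
    (hM : Mhat *ᵥ zstar = fun il => vstar il.2)
    (lmin : ℝ)
    (hlmin_ev : ∃ u : Fin (n - 1) × Fin m → ℝ, u ≠ 0 ∧ (Bbᵀ * Bb) *ᵥ u = lmin • u)
    (hlmin_min : ∀ (ν : ℝ) (v : Fin (n - 1) × Fin m → ℝ), v ≠ 0 →
      (Bbᵀ * Bb) *ᵥ v = ν • v → lmin ≤ ν)
    (snorm : ℝ)
    (hsnorm : snorm = ‖LinearMap.toContinuousLinearMap (Matrix.toEuclideanLin (Bbᵀ * Mhat))‖)
    (hκ : |κ| < wstar * lmin / snorm)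
    (p : ℝ → Fin n × Fin m → ℝ)
    (hp : ∀ t : ℝ, HasDerivAt p
      (-((wstar • (Bb * Bbᵀ) - κ • (Mhat * Bbᵀ)) *ᵥ p t)
        + (wstar • (Bb * Bbᵀ)) *ᵥ pstar) t) :
    ∃ α > (0:ℝ),
      (∀ t : ℝ, ∃ d : ℝ,
        HasDerivAt (fun s : ℝ =>
          (1/2) * ((Bbᵀ *ᵥ p s - zstar) ⬝ᵥ (Bbᵀ *ᵥ p s - zstar))) d t ∧
        d ≤ -α * ((1/2) * ((Bbᵀ *ᵥ p t - zstar) ⬝ᵥ (Bbᵀ *ᵥ p t - zstar)))) ∧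
      (∀ t : ℝ, 0 ≤ t →
        (Bbᵀ *ᵥ p t - zstar) ⬝ᵥ (Bbᵀ *ᵥ p t - zstar) ≤
          ((Bbᵀ *ᵥ p 0 - zstar) ⬝ᵥ (Bbᵀ *ᵥ p 0 - zstar)) * Real.exp (-α * t)) ∧
      Tendsto (fun t : ℝ =>
          -((wstar • (Bb * Bbᵀ) - κ • (Mhat * Bbᵀ)) *ᵥ p t)
            + (wstar • (Bb * Bbᵀ)) *ᵥ pstar)
        atTop (𝓝 (κ • fun il : Fin n × Fin m => vstar il.2)) := by
  classical
  set S : Matrix (Fin (n-1) × Fin m) (Fin (n-1) × Fin m) ℝ := Bbᵀ * Bb with hSdef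
  set N : Matrix (Fin (n-1) × Fin m) (Fin (n-1) × Fin m) ℝ := Bbᵀ * Mhat with hNdef
  set c : Fin n × Fin m → ℝ := fun il => vstar il.2 with hcdef
  set e : ℝ → (Fin (n-1) × Fin m) → ℝ := fun t => Bbᵀ *ᵥ p t - zstar with hedef
  set f : ℝ → (Fin n × Fin m) → ℝ := fun t =>
    -((wstar • (Bb * Bbᵀ) - κ • (Mhat * Bbᵀ)) *ᵥ p t)
      + (wstar • (Bb * Bbᵀ)) *ᵥ pstar with hfdef
  set ed : ℝ → (Fin (n-1) × Fin m) → ℝ := fun t =>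
    -(wstar • (S *ᵥ e t)) + κ • (N *ᵥ e t) with heddef
  have hsl : ∀ k, tl k ≠ hd k := stmt7aux_no_selfloop n hn tl hd hconn
  have hBtc : Bbᵀ *ᵥ c = 0 := by
    rw [hBb]; exact stmt7aux_Bbt_const_eq_zero tl hd hsl vstar
  have hSH : S.IsHermitian := by
    have := Matrix.isHermitian_conjTranspose_mul_self Bb
    simpa using this
  -- positivity of snorm and α
  have hsnn : 0 ≤ snorm := by rw [hsnorm]; exact norm_nonneg _
  have hsp : 0 < snorm := by
    rcases lt_or_eq_of_le hsnn with h | h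
    · exact h
    · exfalso
      rw [← h, div_zero] at hκ
      exact absurd hκ (not_lt.2 (abs_nonneg κ))
  have hκs : |κ| * snorm < wstar * lmin := (lt_div_iff₀ hsp).1 hκ
  set α : ℝ := wstar * lmin - |κ| * snorm with hαdef
  have hα : 0 < α := by rw [hαdef]; linarith
  -- key algebraic identities
  have hNz : N *ᵥ zstar = 0 := by
    rw [hNdef, ← Matrix.mulVec_mulVec, hM, hBtc]
  have hBu : ∀ t, Bbᵀ *ᵥ p t = e t + zstar := by
    intro t; rw [hedef]; simp
  have hNzz : (Bbᵀ * Mhat) *ᵥ (Bbᵀ *ᵥ pstar) = 0 := by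
    rw [← hz, ← hNdef]; exact hNz
  have hMzz : Mhat *ᵥ (Bbᵀ *ᵥ pstar) = c := by rw [← hz]; exact hM
  have hed : ∀ t, Bbᵀ *ᵥ f t = ed t := by
    intro t
    show Bbᵀ *ᵥ (-((wstar • (Bb * Bbᵀ) - κ • (Mhat * Bbᵀ)) *ᵥ p t)
      + (wstar • (Bb * Bbᵀ)) *ᵥ pstar)
      = -(wstar • ((Bbᵀ * Bb) *ᵥ (Bbᵀ *ᵥ p t - zstar)))
        + κ • ((Bbᵀ * Mhat) *ᵥ (Bbᵀ *ᵥ p t - zstar))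
    rw [hz]
    have hNzz' := hNzz
    simp only [Matrix.mulVec_add, Matrix.mulVec_neg, Matrix.mulVec_sub, Matrix.mulVec_smul,
      Matrix.sub_mulVec, Matrix.smul_mulVec, Matrix.mulVec_mulVec,
      Matrix.mul_assoc] at hNzz' ⊢
    rw [hNzz']
    module
  have hfe : ∀ t, f t = -(wstar • (Bb *ᵥ e t)) + κ • (Mhat *ᵥ e t) + κ • c := by
    intro t
    show -((wstar • (Bb * Bbᵀ) - κ • (Mhat * Bbᵀ)) *ᵥ p t) + (wstar • (Bb * Bbᵀ)) *ᵥ pstar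
      = -(wstar • (Bb *ᵥ (Bbᵀ *ᵥ p t - zstar))) + κ • (Mhat *ᵥ (Bbᵀ *ᵥ p t - zstar)) + κ • c
    rw [hz]
    have hMzz' := hMzz
    simp only [Matrix.mulVec_add, Matrix.mulVec_neg, Matrix.mulVec_sub, Matrix.mulVec_smul,
      Matrix.sub_mulVec, Matrix.smul_mulVec, Matrix.mulVec_mulVec,
      Matrix.mul_assoc] at hMzz' ⊢
    rw [← hMzz']
    module
  -- derivative of e
  have he' : ∀ t, HasDerivAt e (ed t) t := by
    intro t
    have hL := (LinearMap.toContinuousLinearMap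
      (Matrix.mulVecLin Bbᵀ)).hasFDerivAt.comp_hasDerivAt t (hp t)
    have h2 : HasDerivAt (fun s => Bbᵀ *ᵥ p s) (Bbᵀ *ᵥ f t) t := hL
    rw [hed t] at h2
    exact h2.sub_const zstar
  -- derivative of e ⬝ᵥ e
  have hQ : ∀ t, HasDerivAt (fun s => e s ⬝ᵥ e s) (2 * (e t ⬝ᵥ ed t)) t := by
    intro t
    have hcomp : ∀ i : Fin (n-1) × Fin m, HasDerivAt (fun s => e s i) (ed t i) t := by
      intro i
      exact ((ContinuousLinearMap.proj (R := ℝ) (φ := fun _ : Fin (n-1) × Fin m => ℝ) i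
        ).hasFDerivAt (x := e t)).comp_hasDerivAt t (he' t)
    have hsum : HasDerivAt (fun s => ∑ i, e s i * e s i)
        (∑ i, (ed t i * e t i + e t i * ed t i)) t := by
      apply HasDerivAt.fun_sum
      intro i _
      exact (hcomp i).mul (hcomp i)
    have hrw : (∑ i, (ed t i * e t i + e t i * ed t i)) = 2 * (e t ⬝ᵥ ed t) := by
      rw [dotProduct, Finset.mul_sum]
      apply Finset.sum_congr rfl
      intros; ring
    rw [hrw] at hsum
    exact hsum
  have hV : ∀ t, HasDerivAt (fun s => (1/2 : ℝ) * (e s ⬝ᵥ e s)) (e t ⬝ᵥ ed t) t := by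
    intro t
    have := (hQ t).const_mul (1/2 : ℝ)
    have hrw : (1/2 : ℝ) * (2 * (e t ⬝ᵥ ed t)) = e t ⬝ᵥ ed t := by ring
    rw [hrw] at this
    exact this
  -- the key differential inequality
  have hdle : ∀ t, e t ⬝ᵥ ed t ≤ -α * (e t ⬝ᵥ e t) := by
    intro t
    have h1 : e t ⬝ᵥ ed t = -(wstar * (e t ⬝ᵥ (S *ᵥ e t))) + κ * (e t ⬝ᵥ (N *ᵥ e t)) := by
      rw [heddef]
      show e t ⬝ᵥ (-(wstar • (S *ᵥ e t)) + κ • (N *ᵥ e t)) = _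
      rw [dotProduct_add, dotProduct_neg, dotProduct_smul, dotProduct_smul]
      simp [smul_eq_mul]
    have h2 : lmin * (e t ⬝ᵥ e t) ≤ e t ⬝ᵥ (S *ᵥ e t) :=
      stmt7aux_rayleigh_lower S hSH lmin hlmin_min (e t)
    have h3 : |e t ⬝ᵥ (N *ᵥ e t)| ≤ snorm * (e t ⬝ᵥ e t) := by
      rw [hsnorm, hNdef]
      exact stmt7aux_dot_mulVec_abs_le _ (e t)
    have h4 : κ * (e t ⬝ᵥ (N *ᵥ e t)) ≤ |κ| * (snorm * (e t ⬝ᵥ e t)) := by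
      calc κ * (e t ⬝ᵥ (N *ᵥ e t)) ≤ |κ * (e t ⬝ᵥ (N *ᵥ e t))| := le_abs_self _
        _ = |κ| * |e t ⬝ᵥ (N *ᵥ e t)| := abs_mul _ _
        _ ≤ |κ| * (snorm * (e t ⬝ᵥ e t)) := mul_le_mul_of_nonneg_left h3 (abs_nonneg κ)
    have h5 : wstar * (lmin * (e t ⬝ᵥ e t)) ≤ wstar * (e t ⬝ᵥ (S *ᵥ e t)) :=
      mul_le_mul_of_nonneg_left h2 hw.le
    rw [h1, hαdef]
    nlinarith [stmt7aux_dotself_nonneg (e t)]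
  have hg : ∀ s, HasDerivAt (fun r => (e r ⬝ᵥ e r) * Real.exp (α * r))
      ((2 * (e s ⬝ᵥ ed s)) * Real.exp (α * s) + (e s ⬝ᵥ e s) * (Real.exp (α * s) * α)) s := by
    intro s
    have hexp : HasDerivAt (fun r => Real.exp (α * r)) (Real.exp (α * s) * α) s := by
      have h0 : HasDerivAt (fun r : ℝ => α * r) α s := by
        simpa using (hasDerivAt_id s).const_mul α
      exact (Real.hasDerivAt_exp (α * s)).comp s h0
    exact (hQ s).mul hexp
  have hganti : Antitone (fun r => (e r ⬝ᵥ e r) * Real.exp (α * r)) := by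
    apply antitone_of_deriv_nonpos
    · intro x; exact (hg x).differentiableAt
    · intro x
      rw [(hg x).deriv]
      have h1 := hdle x
      have h2 := stmt7aux_dotself_nonneg (e x)
      have h3 := mul_le_mul_of_nonneg_right h1 (Real.exp_pos (α * x)).le
      have h4 : 0 ≤ α * (e x ⬝ᵥ e x) * Real.exp (α * x) :=
        mul_nonneg (mul_nonneg hα.le h2) (Real.exp_pos (α * x)).le
      nlinarith [h3, h4]
  have hdecay : ∀ t, 0 ≤ t → e t ⬝ᵥ e t ≤ (e 0 ⬝ᵥ e 0) * Real.exp (-α * t) := by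
    intro t ht
    have hle := hganti ht
    simp only [mul_zero, Real.exp_zero, mul_one] at hle
    rw [neg_mul, Real.exp_neg, ← div_eq_mul_inv, le_div_iff₀ (Real.exp_pos _)]
    exact hle
  refine ⟨α, hα, ?_, ?_, ?_⟩
  · -- first conjunct
    intro t
    refine ⟨e t ⬝ᵥ ed t, hV t, ?_⟩
    have h1 := hdle t
    have h2 := stmt7aux_dotself_nonneg (e t)
    nlinarith
  · -- exponential decay
    exact hdecay
  · -- tendsto
    have hexp0 : Tendsto (fun t : ℝ => Real.exp (-α * t)) atTop (𝓝 0) := by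
      apply Real.tendsto_exp_atBot.comp
      have h1 : Tendsto (fun t : ℝ => α * t) atTop atTop :=
        Tendsto.const_mul_atTop hα tendsto_id
      have h3 : Tendsto (fun t : ℝ => -(α * t)) atTop atBot := tendsto_neg_atTop_atBot.comp h1
      exact h3.congr fun t => (neg_mul α t).symm
    have hee : Tendsto (fun t => e t ⬝ᵥ e t) atTop (𝓝 0) := by
      have hub : Tendsto (fun t : ℝ => ((e 0 ⬝ᵥ e 0)) * Real.exp (-α * t)) atTop (𝓝 0) := by
        have := hexp0.const_mul (e 0 ⬝ᵥ e 0)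
        simpa using this
      apply tendsto_of_tendsto_of_tendsto_of_le_of_le' tendsto_const_nhds hub
      · exact Eventually.of_forall fun t => stmt7aux_dotself_nonneg (e t)
      · exact (eventually_ge_atTop 0).mono fun t ht => hdecay t ht
    have he0 : Tendsto e atTop (𝓝 0) := by
      rw [tendsto_pi_nhds]
      intro i
      have hsq : Tendsto (fun t => e t i * e t i) atTop (𝓝 0) := by
        apply tendsto_of_tendsto_of_tendsto_of_le_of_le tendsto_const_nhds hee
        · intro t; exact mul_self_nonneg _
        · intro t
          exact Finset.single_le_sum (f := fun j => e t j * e t j)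
            (fun j _ => mul_self_nonneg _) (Finset.mem_univ i)
      have habs : Tendsto (fun t => |e t i|) atTop (𝓝 0) := by
        have hcont := (Real.continuous_sqrt.tendsto 0)
        have hC := hcont.comp hsq
        rw [Real.sqrt_zero] at hC
        exact hC.congr fun t => by
          rw [Function.comp_apply, Real.sqrt_mul_self_eq_abs]
      have := (tendsto_zero_iff_abs_tendsto_zero (fun t => e t i)).2 habs
      simpa using this
    have hmv : ∀ (A : Matrix (Fin n × Fin m) (Fin (n-1) × Fin m) ℝ),
        Tendsto (fun t => A *ᵥ e t) atTop (𝓝 0) := by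
      intro A
      have hc : Continuous fun x : (Fin (n-1) × Fin m) → ℝ => A *ᵥ x :=
        (continuous_const (y := A)).matrix_mulVec continuous_id
      have h0 := hc.tendsto 0
      rw [Matrix.mulVec_zero] at h0
      exact h0.comp he0
    have hfinal : Tendsto (fun t => -(wstar • (Bb *ᵥ e t)) + κ • (Mhat *ᵥ e t) + κ • c)
        atTop (𝓝 (κ • c)) := by
      have h1 := (hmv Bb).const_smul wstar
      rw [smul_zero] at h1
      have h1' := h1.neg
      rw [neg_zero] at h1'
      have h2 := (hmv Mhat).const_smul κ
      rw [smul_zero] at h2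
      have h3 := (h1'.add h2).add_const (κ • c)
      rw [add_zero, zero_add] at h3
      exact h3
    refine Tendsto.congr (fun t => (hfe t).symm) ?_
    exact hfinal
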